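/- Let μ be an absolutely continuous probability measure on ℝ with density f satisfying ∫_ℝ |f(x)|^{1+q} dx = Q < ∞ for some q > 0. Let 0 < τ ≤ 1 and suppose B = ∫_ℝ |x|^τ dμ(x) < ∞. Then for every κ with 0 < κ < [1 + 2/τ + 1/q]^{−1}, there exists a finite constant K (depending only on κ, τ, q, Q and B) such that for every α ∈ ℝ: ∫_ℝ |x|^κ / |x − α|^κ dμ(x) ≤ K ∫_ℝ |x − α|^{−κ} dμ(x). -/

import Mathlib

open MeasureTheory Real Set
open scoped NNReal ENNReal

set_option maxHeartbeats 2000000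

noncomputable section

namespace AizenmanProofAux


lemma rpow_add_le_add_rpow' {x y : ℝ} (κ : ℝ) (hx : 0 ≤ x) (hy : 0 ≤ y)
    (hκ : 0 ≤ κ) (hκ1 : κ ≤ 1) : (x + y) ^ κ ≤ x ^ κ + y ^ κ := by
  have h := NNReal.rpow_add_le_add_rpow (x.toNNReal) (y.toNNReal) hκ hκ1
  have hxy : ((x.toNNReal + y.toNNReal : ℝ≥0) : ℝ) = x + y := by
    push_cast [Real.coe_toNNReal x hx, Real.coe_toNNReal y hy]; ring
  calc (x + y) ^ κ = ((x.toNNReal + y.toNNReal : ℝ≥0) : ℝ) ^ κ := by rw [hxy]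
    _ = (((x.toNNReal + y.toNNReal : ℝ≥0) ^ κ : ℝ≥0) : ℝ) := by
        rw [NNReal.coe_rpow]
    _ ≤ ((x.toNNReal ^ κ + y.toNNReal ^ κ : ℝ≥0) : ℝ) := by exact_mod_cast h
    _ = x ^ κ + y ^ κ := by
        push_cast [NNReal.coe_rpow, Real.coe_toNNReal x hx, Real.coe_toNNReal y hy]
        ring

lemma strip_lintegral_le (c s : ℝ) (hc1 : c < 1) (hs : 0 ≤ s) :
    ∫⁻ t in Icc (-s) s, ENNReal.ofReal (|t| ^ (-c))
      ≤ ENNReal.ofReal (2 * (s ^ (1 - c) / (1 - c))) := by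
  have hIcc0 : ∫⁻ t in Icc 0 s, ENNReal.ofReal (|t| ^ (-c))
      = ENNReal.ofReal (s ^ (1 - c) / (1 - c)) := by
    rw [setLIntegral_congr ((Ioc_ae_eq_Icc (μ := volume) (a := (0:ℝ)) (b := s)).symm)]
    have hcongr : ∫⁻ t in Ioc (0:ℝ) s, ENNReal.ofReal (|t| ^ (-c))
        = ∫⁻ t in Ioc (0:ℝ) s, ENNReal.ofReal (t ^ (-c)) :=
      setLIntegral_congr_fun measurableSet_Ioc
        (fun t ht => by simp only [abs_of_pos ht.1])
    have hint : IntegrableOn (fun t : ℝ => t ^ (-c)) (Ioc 0 s) :=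
      (intervalIntegral.intervalIntegrable_rpow' (by linarith)).1
    have hnn : 0 ≤ᵐ[volume.restrict (Ioc (0:ℝ) s)] fun t : ℝ => t ^ (-c) := by
      filter_upwards [ae_restrict_mem measurableSet_Ioc] with t ht
      exact Real.rpow_nonneg ht.1.le _
    rw [hcongr, ← ofReal_integral_eq_lintegral_ofReal hint hnn]
    congr 1
    rw [← intervalIntegral.integral_of_le hs, integral_rpow (Or.inl (by linarith)),
      Real.zero_rpow (ne_of_gt (by linarith : (0:ℝ) < -c + 1))]
    have : -c + 1 = 1 - c := by ring
    rw [this]; ring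
  have hneg : ∫⁻ t in Icc (-s) 0, ENNReal.ofReal (|t| ^ (-c))
      = ∫⁻ t in Icc (0:ℝ) s, ENNReal.ofReal (|t| ^ (-c)) := by
    have hmeas : Measurable fun t : ℝ => ENNReal.ofReal (|t| ^ (-c)) :=
      (((measurable_id (α := ℝ)).abs.pow_const (-c)).ennreal_ofReal)
    calc ∫⁻ t in Icc (-s) 0, ENNReal.ofReal (|t| ^ (-c)) ∂volume
        = ∫⁻ t in Icc (-s) 0, ENNReal.ofReal (|t| ^ (-c))
            ∂(Measure.map (fun x : ℝ => -x) volume) := by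
          rw [show (fun x : ℝ => -x) = Neg.neg from rfl, Measure.map_neg_eq_self]
      _ = ∫⁻ x in (fun x : ℝ => -x) ⁻¹' Icc (-s) 0, ENNReal.ofReal (|(-x)| ^ (-c)) ∂volume := by
          rw [setLIntegral_map measurableSet_Icc hmeas measurable_neg]
      _ = ∫⁻ t in Icc (0:ℝ) s, ENNReal.ofReal (|t| ^ (-c)) ∂volume := by
          have : (fun x : ℝ => -x) ⁻¹' Icc (-s) 0 = Icc (0:ℝ) s := by
            ext x
            simp only [Set.mem_preimage, Set.mem_Icc]
            constructor <;> rintro ⟨h1, h2⟩ <;> constructor <;> linarith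
          rw [this]
          simp only [abs_neg]
  calc ∫⁻ t in Icc (-s) s, ENNReal.ofReal (|t| ^ (-c))
      ≤ ∫⁻ t in Icc (-s) 0 ∪ Icc (0:ℝ) s, ENNReal.ofReal (|t| ^ (-c)) := by
        apply lintegral_mono_set
        intro x hx
        rcases le_total x 0 with h | h
        · exact Or.inl ⟨hx.1, h⟩
        · exact Or.inr ⟨h, hx.2⟩
    _ ≤ (∫⁻ t in Icc (-s) 0, ENNReal.ofReal (|t| ^ (-c)))
        + ∫⁻ t in Icc (0:ℝ) s, ENNReal.ofReal (|t| ^ (-c)) := lintegral_union_le _ _ _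
    _ = ENNReal.ofReal (s ^ (1 - c) / (1 - c)) + ENNReal.ofReal (s ^ (1 - c) / (1 - c)) := by
        rw [hneg, hIcc0]
    _ = ENNReal.ofReal (2 * (s ^ (1 - c) / (1 - c))) := by
        rw [← ENNReal.ofReal_add (div_nonneg (Real.rpow_nonneg hs _) (by linarith))
          (div_nonneg (Real.rpow_nonneg hs _) (by linarith))]
        ring_nf

lemma translate_closedBall (g : ℝ → ℝ≥0∞) (α s : ℝ) :
    ∫⁻ x in Metric.closedBall α s, g (x - α) ∂volume = ∫⁻ t in Icc (-s) s, g t ∂volume := by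
  have hmem : ∀ x : ℝ, x ∈ Metric.closedBall α s ↔ x - α ∈ Icc (-s) s := by
    intro x
    simp [Metric.mem_closedBall, Real.dist_eq, mem_Icc, abs_le]
  have hind : (fun x => (Metric.closedBall α s).indicator (fun x => g (x - α)) x)
      = fun x => ((Icc (-s) s).indicator g) (x + -α) := by
    funext x
    by_cases h : x - α ∈ Icc (-s) s
    · rw [Set.indicator_of_mem ((hmem x).mpr h), show x + -α = x - α from (sub_eq_add_neg x α).symm,
        Set.indicator_of_mem h]
    · rw [Set.indicator_of_notMem (fun hx => h ((hmem x).mp hx)),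
        show x + -α = x - α from (sub_eq_add_neg x α).symm, Set.indicator_of_notMem h]
  calc ∫⁻ x in Metric.closedBall α s, g (x - α) ∂volume
      = ∫⁻ x, (Metric.closedBall α s).indicator (fun x => g (x - α)) x ∂volume := by
        rw [lintegral_indicator Metric.isClosed_closedBall.measurableSet]
    _ = ∫⁻ x, ((Icc (-s) s).indicator g) (x + -α) ∂volume := by rw [hind]
    _ = ∫⁻ x, ((Icc (-s) s).indicator g) x ∂volume :=
        lintegral_add_right_eq_self _ (-α)
    _ = ∫⁻ t in Icc (-s) s, g t ∂volume := by
        rw [lintegral_indicator measurableSet_Icc]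

lemma holder_strip {f : ℝ → ℝ} (hfmeas : Measurable f) {q : ℝ} (hq : 0 < q) {Q : ℝ}
    (hQint : Integrable (fun x => |f x| ^ (1 + q)) volume)
    (hQ : ∫ x, |f x| ^ (1 + q) = Q)
    {κ : ℝ} (hκq : κ * ((1 + q) / q) < 1)
    (α s : ℝ) (hs : 0 ≤ s) :
    ∫⁻ x in Metric.closedBall α s, ENNReal.ofReal (|x - α| ^ (-κ))
        ∂(volume.withDensity fun x => ENNReal.ofReal (f x))
      ≤ ENNReal.ofReal (Q ^ (1 / (1 + q)) *
          (2 * (s ^ (1 - κ * ((1 + q) / q)) / (1 - κ * ((1 + q) / q)))) ^ (q / (1 + q))) := by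
  have hq1 : (0:ℝ) < 1 + q := by linarith
  set r : ℝ := (1 + q) / q with hr
  have hr0 : 0 < r := by positivity
  have hrinv : 1 / r = q / (1 + q) := by rw [hr]; field_simp
  have hconj : (1 + q).HolderConjugate r := by
    rw [Real.holderConjugate_iff]
    constructor
    · linarith
    · have : r⁻¹ = q / (1 + q) := by rw [hr, inv_div]
      rw [this]
      field_simp
  have hQ0 : 0 ≤ Q := hQ ▸ integral_nonneg (fun x => Real.rpow_nonneg (abs_nonneg _) _)
  have hX0 : 0 ≤ 2 * (s ^ (1 - κ * r) / (1 - κ * r)) :=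
    mul_nonneg (by norm_num) (div_nonneg (Real.rpow_nonneg hs _) (by linarith))
  have hw : Measurable fun x : ℝ => ENNReal.ofReal (f x) := hfmeas.ennreal_ofReal
  have hg : Measurable fun x : ℝ => ENNReal.ofReal (|x - α| ^ (-κ)) :=
    (((measurable_id.sub_const α).abs).pow_const _).ennreal_ofReal
  have hD : MeasurableSet (Metric.closedBall α s) := Metric.isClosed_closedBall.measurableSet
  calc ∫⁻ x in Metric.closedBall α s, ENNReal.ofReal (|x - α| ^ (-κ))
        ∂(volume.withDensity fun x => ENNReal.ofReal (f x))
      = ∫⁻ x, ((fun x => ENNReal.ofReal (f x)) * fun x => ENNReal.ofReal (|x - α| ^ (-κ))) x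
          ∂(volume.restrict (Metric.closedBall α s)) := by
        rw [restrict_withDensity hD, lintegral_withDensity_eq_lintegral_mul _ hw hg]
    _ ≤ (∫⁻ x, ENNReal.ofReal (f x) ^ (1 + q) ∂(volume.restrict (Metric.closedBall α s)))
            ^ (1 / (1 + q)) *
        (∫⁻ x, ENNReal.ofReal (|x - α| ^ (-κ)) ^ r ∂(volume.restrict (Metric.closedBall α s)))
            ^ (1 / r) :=
        ENNReal.lintegral_mul_le_Lp_mul_Lq _ hconj hw.aemeasurable hg.aemeasurable
    _ ≤ ENNReal.ofReal Q ^ (1 / (1 + q)) *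
        ENNReal.ofReal (2 * (s ^ (1 - κ * r) / (1 - κ * r))) ^ (1 / r) := by
        gcongr
        · calc ∫⁻ x, ENNReal.ofReal (f x) ^ (1 + q) ∂(volume.restrict (Metric.closedBall α s))
              ≤ ∫⁻ x, ENNReal.ofReal (|f x| ^ (1 + q))
                  ∂(volume.restrict (Metric.closedBall α s)) := by
                apply lintegral_mono fun x => ?_
                rw [← ENNReal.ofReal_rpow_of_nonneg (abs_nonneg _) (by linarith : (0:ℝ) ≤ 1 + q)]
                exact ENNReal.rpow_le_rpow (ENNReal.ofReal_le_ofReal (le_abs_self _)) (by linarith)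
            _ ≤ ∫⁻ x, ENNReal.ofReal (|f x| ^ (1 + q)) ∂volume :=
                setLIntegral_le_lintegral _ _
            _ = ENNReal.ofReal Q := by
                rw [← ofReal_integral_eq_lintegral_ofReal hQint
                  (ae_of_all _ fun x => Real.rpow_nonneg (abs_nonneg _) _), hQ]
        · calc ∫⁻ x, ENNReal.ofReal (|x - α| ^ (-κ)) ^ r
                  ∂(volume.restrict (Metric.closedBall α s))
              = ∫⁻ x in Metric.closedBall α s, ENNReal.ofReal (|x - α| ^ (-(κ * r))) ∂volume := by
                apply lintegral_congr fun x => ?_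
                rw [ENNReal.ofReal_rpow_of_nonneg (Real.rpow_nonneg (abs_nonneg _) _) hr0.le,
                  ← Real.rpow_mul (abs_nonneg _), neg_mul]
            _ = ∫⁻ t in Icc (-s) s, ENNReal.ofReal (|t| ^ (-(κ * r))) ∂volume :=
                translate_closedBall (fun t => ENNReal.ofReal (|t| ^ (-(κ * r)))) α s
            _ ≤ ENNReal.ofReal (2 * (s ^ (1 - κ * r) / (1 - κ * r))) :=
                strip_lintegral_le (κ * r) s hκq hs
    _ = ENNReal.ofReal (Q ^ (1 / (1 + q)) *
          (2 * (s ^ (1 - κ * r) / (1 - κ * r))) ^ (q / (1 + q))) := by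
        rw [ENNReal.ofReal_rpow_of_nonneg hQ0 (by positivity),
          ENNReal.ofReal_rpow_of_nonneg hX0
            (le_of_lt (by rw [hrinv]; positivity : (0:ℝ) < 1 / r)),
          ← ENNReal.ofReal_mul (Real.rpow_nonneg hQ0 _), hrinv]

lemma ball_bound {f : ℝ → ℝ} (hfmeas : Measurable f) {q : ℝ} (hq : 0 < q) {Q : ℝ}
    (hQint : Integrable (fun x => |f x| ^ (1 + q)) volume)
    (hQ : ∫ x, |f x| ^ (1 + q) = Q)
    {κ : ℝ} (hκ0 : 0 < κ) (hκq : κ * ((1 + q) / q) < 1)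
    {μ : Measure ℝ} (hμf : μ = volume.withDensity fun x => ENNReal.ofReal (f x))
    [IsFiniteMeasure μ] (α : ℝ) (D : Set ℝ) :
    ∫⁻ x in D, ENNReal.ofReal (|x - α| ^ (-κ)) ∂μ
      ≤ ENNReal.ofReal ((Q ^ (1 / (1 + q)) * (2 / (1 - κ * ((1 + q) / q))) ^ (q / (1 + q)) + 1)
          * (μ D).toReal ^ (1 - κ * ((1 + q) / q))) := by
  have hq1 : (0:ℝ) < 1 + q := by linarith
  set r : ℝ := (1 + q) / q with hr
  have hr0 : 0 < r := by positivity
  have hQ0 : 0 ≤ Q := hQ ▸ integral_nonneg (fun x => Real.rpow_nonneg (abs_nonneg _) _)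
  set CH : ℝ := Q ^ (1 / (1 + q)) * (2 / (1 - κ * r)) ^ (q / (1 + q)) with hCHdef
  have hCH0 : 0 ≤ CH := mul_nonneg (Real.rpow_nonneg hQ0 _)
    (Real.rpow_nonneg (div_nonneg (by norm_num) (by linarith)) _)
  by_cases hm0 : μ D = 0
  · have : μ.restrict D = 0 := Measure.restrict_eq_zero.mpr hm0
    rw [this, lintegral_zero_measure]
    exact zero_le
  · set m : ℝ := (μ D).toReal with hmdef
    have hmpos : 0 < m := ENNReal.toReal_pos hm0 (measure_ne_top μ D)
    set s : ℝ := m ^ r with hsdef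
    have hspos : 0 < s := Real.rpow_pos_of_pos hmpos r
    have hrq : r * (q / (1 + q)) = 1 := by rw [hr]; field_simp
    -- the two pieces
    have hsplit : ∫⁻ x in D, ENNReal.ofReal (|x - α| ^ (-κ)) ∂μ
        ≤ (∫⁻ x in Metric.closedBall α s, ENNReal.ofReal (|x - α| ^ (-κ)) ∂μ)
          + ∫⁻ x in D \ Metric.closedBall α s, ENNReal.ofReal (|x - α| ^ (-κ)) ∂μ := by
      refine le_trans (lintegral_mono_set fun x hx => ?_)
        (lintegral_union_le _ _ _)
      by_cases h : x ∈ Metric.closedBall α s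
      · exact Or.inl h
      · exact Or.inr ⟨hx, h⟩
    have hball : ∫⁻ x in Metric.closedBall α s, ENNReal.ofReal (|x - α| ^ (-κ)) ∂μ
        ≤ ENNReal.ofReal (CH * m ^ (1 - κ * r)) := by
      rw [hμf]
      refine le_trans (holder_strip hfmeas hq hQint hQ hκq α s hspos.le) ?_
      apply ENNReal.ofReal_le_ofReal
      have e1 : (m ^ r) ^ (1 - κ * r) = m ^ (r * (1 - κ * r)) := (Real.rpow_mul hmpos.le _ _).symm
      have e4 : (m ^ (r * (1 - κ * r))) ^ (q / (1 + q)) = m ^ (1 - κ * r) := by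
        rw [← Real.rpow_mul hmpos.le]
        congr 1
        rw [mul_assoc _ _ (q / (1+q)), mul_comm (1 - κ*r) (q/(1+q)), ← mul_assoc, hrq]
        ring
      rw [hsdef, e1]
      rw [show (2 : ℝ) * (m ^ (r * (1 - κ * r)) / (1 - κ * r))
          = (2 / (1 - κ * r)) * m ^ (r * (1 - κ * r)) by ring]
      rw [Real.mul_rpow (div_nonneg (by norm_num) (by linarith)) (Real.rpow_nonneg hmpos.le _)]
      rw [e4, hCHdef]
      ring_nf
      exact le_refl _
    have hdiff : ∫⁻ x in D \ Metric.closedBall α s, ENNReal.ofReal (|x - α| ^ (-κ)) ∂μ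
        ≤ ENNReal.ofReal (m ^ (1 - κ * r)) := by
      have hpt : ∀ x ∈ D \ Metric.closedBall α s,
          ENNReal.ofReal (|x - α| ^ (-κ)) ≤ ENNReal.ofReal (s ^ (-κ)) := by
        rintro x ⟨-, hx⟩
        apply ENNReal.ofReal_le_ofReal
        have : s ≤ |x - α| := by
          have := Metric.mem_closedBall.not.mp hx
          rw [Real.dist_eq] at this
          linarith [not_le.mp this]
        exact Real.rpow_le_rpow_of_nonpos hspos this (neg_nonpos.mpr hκ0.le)
      calc ∫⁻ x in D \ Metric.closedBall α s, ENNReal.ofReal (|x - α| ^ (-κ)) ∂μ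
          ≤ ∫⁻ _ in D \ Metric.closedBall α s, ENNReal.ofReal (s ^ (-κ)) ∂μ :=
            setLIntegral_mono measurable_const hpt
        _ = ENNReal.ofReal (s ^ (-κ)) * μ (D \ Metric.closedBall α s) :=
            setLIntegral_const _ _
        _ ≤ ENNReal.ofReal (s ^ (-κ)) * μ D :=
            mul_le_mul_right (measure_mono diff_subset) _
        _ = ENNReal.ofReal (s ^ (-κ)) * ENNReal.ofReal m := by
            rw [hmdef, ENNReal.ofReal_toReal (measure_ne_top μ D)]
        _ = ENNReal.ofReal (m ^ (1 - κ * r)) := by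
            rw [← ENNReal.ofReal_mul (Real.rpow_nonneg hspos.le _)]
            congr 1
            rw [hsdef, ← Real.rpow_mul hmpos.le]
            nth_rewrite 2 [show m = m ^ (1:ℝ) from (Real.rpow_one m).symm]
            rw [← Real.rpow_add hmpos]
            congr 1
            ring
    calc ∫⁻ x in D, ENNReal.ofReal (|x - α| ^ (-κ)) ∂μ
        ≤ ENNReal.ofReal (CH * m ^ (1 - κ * r)) + ENNReal.ofReal (m ^ (1 - κ * r)) :=
          le_trans hsplit (add_le_add hball hdiff)
      _ = ENNReal.ofReal ((CH + 1) * m ^ (1 - κ * r)) := by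
          rw [← ENNReal.ofReal_add (mul_nonneg hCH0 (Real.rpow_nonneg hmpos.le _))
            (Real.rpow_nonneg hmpos.le _)]
          ring_nf
      _ = ENNReal.ofReal ((Q ^ (1 / (1 + q)) * (2 / (1 - κ * r)) ^ (q / (1 + q)) + 1)
            * m ^ (1 - κ * r)) := by rw [hCHdef]

lemma markov_abs {μ : Measure ℝ} {τ B : ℝ} (hτ0 : 0 < τ)
    (hBint : Integrable (fun x => |x| ^ τ) μ) (hB : ∫ x, |x| ^ τ ∂μ = B)
    {ε : ℝ} (hε : 0 < ε) :
    μ {x : ℝ | ε ≤ |x|} ≤ ENNReal.ofReal (B * ε ^ (-τ)) := by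
  have hlin : ∫⁻ x, ENNReal.ofReal (|x| ^ τ) ∂μ = ENNReal.ofReal B := by
    rw [← ofReal_integral_eq_lintegral_ofReal hBint
      (ae_of_all _ fun x => Real.rpow_nonneg (abs_nonneg _) _), hB]
  have hmeas : AEMeasurable (fun x : ℝ => ENNReal.ofReal (|x| ^ τ)) μ :=
    (((measurable_id.abs).pow_const τ).ennreal_ofReal).aemeasurable
  have hsub : {x : ℝ | ε ≤ |x|} ⊆ {x : ℝ | ENNReal.ofReal (ε ^ τ) ≤ ENNReal.ofReal (|x| ^ τ)} :=
    fun x hx => ENNReal.ofReal_le_ofReal (Real.rpow_le_rpow hε.le hx hτ0.le)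
  have hepos : (0:ℝ) < ε ^ τ := Real.rpow_pos_of_pos hε τ
  calc μ {x : ℝ | ε ≤ |x|}
      ≤ μ {x : ℝ | ENNReal.ofReal (ε ^ τ) ≤ ENNReal.ofReal (|x| ^ τ)} := measure_mono hsub
    _ ≤ (∫⁻ x, ENNReal.ofReal (|x| ^ τ) ∂μ) / ENNReal.ofReal (ε ^ τ) :=
        meas_ge_le_lintegral_div hmeas (by simp [hepos]) ENNReal.ofReal_ne_top
    _ = ENNReal.ofReal B / ENNReal.ofReal (ε ^ τ) := by rw [hlin]
    _ = ENNReal.ofReal (B / ε ^ τ) := (ENNReal.ofReal_div_of_pos hepos).symm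
    _ = ENNReal.ofReal (B * ε ^ (-τ)) := by
        rw [Real.rpow_neg hε.le, div_eq_mul_inv]

lemma exists_half_mass (μ : Measure ℝ) [IsProbabilityMeasure μ] :
    ∃ R : ℝ, 1 ≤ R ∧ ENNReal.ofReal (1 / 2) ≤ μ (Icc (-R) R) := by
  have hmono : Monotone fun n : ℕ => Icc (-(n:ℝ)) n := by
    intro a b hab
    apply Icc_subset_Icc <;> simp only [neg_le_neg_iff, Nat.cast_le] <;> exact_mod_cast hab
  have hunion : (⋃ n : ℕ, Icc (-(n:ℝ)) n) = univ := by
    ext x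
    simp only [mem_iUnion, mem_Icc, mem_univ, iff_true]
    obtain ⟨n, hn⟩ := exists_nat_ge |x|
    exact ⟨n, neg_le_of_abs_le hn, le_of_abs_le hn⟩
  have hsup : (⨆ n : ℕ, μ (Icc (-(n:ℝ)) n)) = 1 := by
    rw [← hmono.measure_iUnion, hunion, measure_univ]
  have hlt : ENNReal.ofReal (1 / 2) < ⨆ n : ℕ, μ (Icc (-(n:ℝ)) n) := by
    rw [hsup]
    exact ENNReal.ofReal_lt_one.mpr (by norm_num)
  obtain ⟨n, hn⟩ := lt_iSup_iff.mp hlt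
  refine ⟨(n : ℝ) + 1, by linarith [Nat.cast_nonneg (α := ℝ) n], ?_⟩
  refine le_trans hn.le (measure_mono (Icc_subset_Icc (by linarith) (by linarith)))


end AizenmanProofAux

/-- Aizenman's lemma.  Let `μ` be an absolutely continuous probability
measure on `ℝ` with density `f` such that `∫ |f|^{1+q} = Q < ∞` for some `q > 0`, let
`0 < τ ≤ 1` with `B = ∫ |x|^τ dμ < ∞`.  Then for every `0 < κ < (1 + 2/τ + 1/q)⁻¹` there is
a finite constant `K` such that for all `α ∈ ℝ`,
`∫ |x|^κ / |x−α|^κ dμ(x) ≤ K ∫ |x−α|^{−κ} dμ(x)` (integrals taken in `[0,∞]`). -/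
theorem aizenman_weighted_fractional_moment_bound
    (μ : Measure ℝ) [IsProbabilityMeasure μ]
    (f : ℝ → ℝ) (hfmeas : Measurable f)
    (hμf : μ = MeasureTheory.volume.withDensity fun x => ENNReal.ofReal (f x))
    (q : ℝ) (hq : 0 < q) (Q : ℝ)
    (hQint : MeasureTheory.Integrable (fun x => |f x| ^ (1 + q)) MeasureTheory.volume)
    (hQ : ∫ x, |f x| ^ (1 + q) = Q)
    (τ : ℝ) (hτ₀ : 0 < τ) (hτ₁ : τ ≤ 1)
    (B : ℝ) (hBint : MeasureTheory.Integrable (fun x => |x| ^ τ) μ)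
    (hB : ∫ x, |x| ^ τ ∂μ = B) :
    ∀ κ : ℝ, 0 < κ → κ < (1 + 2 / τ + 1 / q)⁻¹ →
      ∃ K : ℝ, ∀ α : ℝ,
        ∫⁻ x, ENNReal.ofReal (|x| ^ κ / |x - α| ^ κ) ∂μ
          ≤ ENNReal.ofReal K * ∫⁻ x, ENNReal.ofReal (|x - α| ^ (-κ)) ∂μ := by
  intro κ hκ0 hκlt
  have hq1 : (0:ℝ) < 1 + q := by linarith
  set r : ℝ := (1 + q) / q with hr
  have hr0 : 0 < r := by positivity
  have hd0 : (0:ℝ) < 1 + 2 / τ + 1 / q := by positivity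
  have hκd : κ * (1 + 2 / τ + 1 / q) < 1 := by
    have h := mul_lt_mul_of_pos_right hκlt hd0
    rwa [inv_mul_cancel₀ (ne_of_gt hd0)] at h
  have hrid : κ * (1 + 2 / τ + 1 / q) = κ * r + 2 * κ / τ := by
    rw [hr]; field_simp; ring
  have hsum : κ * r + 2 * κ / τ < 1 := by rw [← hrid]; exact hκd
  have h2κτ : 0 < 2 * κ / τ := by positivity
  have hκr : κ * r < 1 := by linarith
  have hκr0 : 0 < 1 - κ * r := by linarith
  have hexp : 2 * κ ≤ τ * (1 - κ * r) := by
    have h1 := mul_lt_mul_of_pos_left hsum hτ₀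
    have h2 : τ * (2 * κ / τ) = 2 * κ := by field_simp
    nlinarith [h1, h2]
  have hr1 : 1 < r := by
    rw [hr, lt_div_iff₀ hq]; linarith
  have hκ1 : κ < 1 := by nlinarith [mul_lt_mul_of_pos_left hr1 hκ0]
  have hκτ : κ < τ := by nlinarith [mul_pos hτ₀ (mul_pos hκ0 hr0), hexp]
  have hQ0 : 0 ≤ Q := hQ ▸ integral_nonneg fun x => Real.rpow_nonneg (abs_nonneg _) _
  have hB0 : 0 ≤ B := hB ▸ integral_nonneg fun x => Real.rpow_nonneg (abs_nonneg _) _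
  obtain ⟨R, hR1, hRmass⟩ := AizenmanProofAux.exists_half_mass μ
  have hR0 : (0:ℝ) < R := by linarith
  set CH : ℝ := Q ^ (1 / (1 + q)) * (2 / (1 - κ * r)) ^ (q / (1 + q)) with hCHdef
  have hCH0 : 0 ≤ CH := mul_nonneg (Real.rpow_nonneg hQ0 _)
    (Real.rpow_nonneg (div_nonneg (by norm_num) hκr0.le) _)
  set C2 : ℝ := (3 / 2 : ℝ) ^ κ * ((CH + 1) * (B ^ (1 - κ * r) * 2 ^ (τ * (1 - κ * r)))) with hC2
  have hC20 : 0 ≤ C2 :=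
    mul_nonneg (Real.rpow_nonneg (by norm_num) _)
      (mul_nonneg (by linarith) (mul_nonneg (Real.rpow_nonneg hB0 _)
        (Real.rpow_nonneg (by norm_num) _)))
  set C3 : ℝ := C2 + 2 ^ κ * (1 + B) with hC3
  have hC30 : 0 ≤ C3 := by
    have : (0:ℝ) ≤ 2 ^ κ * (1 + B) :=
      mul_nonneg (Real.rpow_nonneg (by norm_num) _) (by linarith)
    linarith
  set P : ℝ := (R + 1) ^ κ with hP
  set Pinv : ℝ := (R + 1) ^ (-κ) with hPinv
  have hPpos : 0 < P := Real.rpow_pos_of_pos (by linarith) _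
  have hPinvpos : 0 < Pinv := Real.rpow_pos_of_pos (by linarith) _
  have hPP : P * Pinv = 1 := by
    rw [hP, hPinv, ← Real.rpow_add (by linarith : (0:ℝ) < R + 1)]
    norm_num
  set K : ℝ := 2 * P * (C3 + 1) + 1 with hK
  have hK0 : 0 ≤ K := by positivity
  refine ⟨K, fun α => ?_⟩
  set a : ℝ := |α| with ha
  have ha0 : 0 ≤ a := abs_nonneg α
  set G : ℝ≥0∞ := ∫⁻ x, ENNReal.ofReal (|x - α| ^ (-κ)) ∂μ with hG
  -- almost everywhere x ≠ α
  have hsing : μ {α} = 0 := by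
    rw [hμf, withDensity_apply _ (measurableSet_singleton α),
      Measure.restrict_eq_zero.mpr Real.volume_singleton, lintegral_zero_measure]
  have hne : ∀ᵐ x ∂μ, x ≠ α := by
    rw [ae_iff]
    convert hsing using 2
    ext x
    simp [not_not]
  -- lower bound for G
  have hGlow : ENNReal.ofReal (1 / 2 * (R + a) ^ (-κ)) ≤ G := by
    have hRa : (0:ℝ) < R + a := by linarith
    have hae : ∀ᵐ x ∂(μ.restrict (Icc (-R) R)),
        ENNReal.ofReal ((R + a) ^ (-κ)) ≤ ENNReal.ofReal (|x - α| ^ (-κ)) := by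
      filter_upwards [ae_restrict_mem measurableSet_Icc, ae_restrict_of_ae hne] with x hx hxα
      apply ENNReal.ofReal_le_ofReal
      have h1 : 0 < |x - α| := abs_pos.mpr (sub_ne_zero.mpr hxα)
      have h2 : |x - α| ≤ R + a := by
        calc |x - α| = |x + -α| := by rw [sub_eq_add_neg]
          _ ≤ |x| + |(-α)| := abs_add_le _ _
          _ = |x| + a := by rw [abs_neg]
          _ ≤ R + a := by
              have := abs_le.mpr ⟨hx.1, hx.2⟩
              linarith
      exact Real.rpow_le_rpow_of_nonpos h1 h2 (neg_nonpos.mpr hκ0.le)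
    calc ENNReal.ofReal (1 / 2 * (R + a) ^ (-κ))
        = ENNReal.ofReal ((R + a) ^ (-κ)) * ENNReal.ofReal (1 / 2) := by
          rw [← ENNReal.ofReal_mul (Real.rpow_nonneg hRa.le _), mul_comm]
      _ ≤ ENNReal.ofReal ((R + a) ^ (-κ)) * μ (Icc (-R) R) := mul_le_mul_right hRmass _
      _ = ∫⁻ _ in Icc (-R) R, ENNReal.ofReal ((R + a) ^ (-κ)) ∂μ := (setLIntegral_const _ _).symm
      _ ≤ ∫⁻ x in Icc (-R) R, ENNReal.ofReal (|x - α| ^ (-κ)) ∂μ := lintegral_mono_ae hae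
      _ ≤ G := setLIntegral_le_lintegral _ _
  rcases le_or_gt a 1 with hcase | hcase
  · -- |α| ≤ 1
    have hpt : ∀ x : ℝ, ENNReal.ofReal (|x| ^ κ / |x - α| ^ κ)
        ≤ ENNReal.ofReal 1 + ENNReal.ofReal (|x - α| ^ (-κ)) := by
      intro x
      by_cases hx : x = α
      · rw [hx]
        simp [Real.zero_rpow (ne_of_gt hκ0)]
      · have h1 : 0 < |x - α| := abs_pos.mpr (sub_ne_zero.mpr hx)
        rw [← ENNReal.ofReal_add (by norm_num) (Real.rpow_nonneg (abs_nonneg _) _)]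
        apply ENNReal.ofReal_le_ofReal
        have h3 : |x| ≤ |x - α| + 1 := by
          calc |x| = |(x - α) + α| := by ring_nf
            _ ≤ |x - α| + |α| := abs_add_le _ _
            _ ≤ |x - α| + 1 := by rw [← ha]; linarith
        have h2 : |x| ^ κ ≤ |x - α| ^ κ + 1 := by
          calc |x| ^ κ ≤ (|x - α| + 1) ^ κ :=
              Real.rpow_le_rpow (abs_nonneg _) h3 hκ0.le
            _ ≤ |x - α| ^ κ + 1 ^ κ :=
              AizenmanProofAux.rpow_add_le_add_rpow' κ (abs_nonneg _) (by norm_num)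
                hκ0.le hκ1.le
            _ = |x - α| ^ κ + 1 := by rw [Real.one_rpow]
        rw [div_le_iff₀ (Real.rpow_pos_of_pos h1 κ)]
        have h4 : (1 + |x - α| ^ (-κ)) * |x - α| ^ κ = |x - α| ^ κ + 1 := by
          rw [add_mul, one_mul, ← Real.rpow_add h1]
          norm_num
        linarith [h4.ge]
    have hL : (∫⁻ x, ENNReal.ofReal (|x| ^ κ / |x - α| ^ κ) ∂μ) ≤ 1 + G := by
      calc ∫⁻ x, ENNReal.ofReal (|x| ^ κ / |x - α| ^ κ) ∂μ
          ≤ ∫⁻ x, (ENNReal.ofReal 1 + ENNReal.ofReal (|x - α| ^ (-κ))) ∂μ := lintegral_mono hpt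
        _ = ENNReal.ofReal 1 * μ univ + G := by
            rw [lintegral_add_left measurable_const, lintegral_const]
        _ = 1 + G := by simp [measure_univ]
    have hhalf : ENNReal.ofReal (1 / 2 * Pinv) ≤ G := by
      refine le_trans (ENNReal.ofReal_le_ofReal ?_) hGlow
      have hmono : Pinv ≤ (R + a) ^ (-κ) := by
        rw [hPinv]
        exact Real.rpow_le_rpow_of_nonpos (by linarith) (by linarith)
          (neg_nonpos.mpr hκ0.le)
      linarith
    have hone : (1:ℝ≥0∞) ≤ ENNReal.ofReal (2 * P) * G := by
      calc (1:ℝ≥0∞) = ENNReal.ofReal (2 * P * (1 / 2 * Pinv)) := by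
            rw [show (2:ℝ) * P * (1 / 2 * Pinv) = P * Pinv by ring, hPP]
            norm_num
        _ = ENNReal.ofReal (2 * P) * ENNReal.ofReal (1 / 2 * Pinv) :=
            ENNReal.ofReal_mul (by positivity)
        _ ≤ ENNReal.ofReal (2 * P) * G := mul_le_mul_right hhalf _
    calc ∫⁻ x, ENNReal.ofReal (|x| ^ κ / |x - α| ^ κ) ∂μ
        ≤ 1 + G := hL
      _ ≤ ENNReal.ofReal (2 * P) * G + G := add_le_add hone le_rfl
      _ = (ENNReal.ofReal (2 * P) + 1) * G := by rw [add_mul, one_mul]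
      _ = ENNReal.ofReal (2 * P + 1) * G := by
          rw [ENNReal.ofReal_add (by positivity) zero_le_one, ENNReal.ofReal_one]
      _ ≤ ENNReal.ofReal K * G := by
          apply mul_le_mul_left
          apply ENNReal.ofReal_le_ofReal
          rw [hK]
          nlinarith [hPpos, hC30]
  · -- 1 < |α|
    set DD : Set ℝ := Metric.closedBall α (a / 2) with hDD
    have ha2 : (0:ℝ) < a / 2 := by linarith
    have hDmeas : MeasurableSet DD := Metric.isClosed_closedBall.measurableSet
    -- pointwise bound off the ball
    have hmeas1 : Measurable fun x : ℝ => ENNReal.ofReal ((a / 2) ^ (-κ) * (1 + |x| ^ τ)) :=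
      ((measurable_const.mul ((measurable_const.add
        ((measurable_id.abs).pow_const τ))))).ennreal_ofReal
    have hcpt : ∀ x ∈ DDᶜ, ENNReal.ofReal (|x| ^ κ / |x - α| ^ κ)
        ≤ ENNReal.ofReal ((a / 2) ^ (-κ) * (1 + |x| ^ τ)) := by
      intro x hx
      apply ENNReal.ofReal_le_ofReal
      have hfar : a / 2 ≤ |x - α| := by
        have := Metric.mem_closedBall.not.mp hx
        rw [Real.dist_eq] at this
        linarith [not_le.mp this]
      have hden : (a / 2) ^ κ ≤ |x - α| ^ κ := Real.rpow_le_rpow ha2.le hfar hκ0.le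
      have hdenpos : (0:ℝ) < (a / 2) ^ κ := Real.rpow_pos_of_pos ha2 _
      have step1 : |x| ^ κ / |x - α| ^ κ ≤ |x| ^ κ / (a / 2) ^ κ := by
        have hnn : (0:ℝ) ≤ |x| ^ κ := Real.rpow_nonneg (abs_nonneg _) _
        gcongr
      have step2 : |x| ^ κ ≤ 1 + |x| ^ τ := by
        rcases le_or_gt |x| 1 with h | h
        · have : |x| ^ κ ≤ 1 := Real.rpow_le_one (abs_nonneg _) h hκ0.le
          have : (0:ℝ) ≤ |x| ^ τ := Real.rpow_nonneg (abs_nonneg _) _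
          linarith [Real.rpow_le_one (abs_nonneg x) h hκ0.le]
        · have : |x| ^ κ ≤ |x| ^ τ := Real.rpow_le_rpow_of_exponent_le h.le hκτ.le
          linarith
      calc |x| ^ κ / |x - α| ^ κ ≤ |x| ^ κ / (a / 2) ^ κ := step1
        _ = (a / 2) ^ (-κ) * |x| ^ κ := by
            rw [Real.rpow_neg ha2.le, div_eq_mul_inv, mul_comm]
        _ ≤ (a / 2) ^ (-κ) * (1 + |x| ^ τ) := by
            apply mul_le_mul_of_nonneg_left step2 (Real.rpow_nonneg ha2.le _)
    have hIB : ∫⁻ x, ENNReal.ofReal (1 + |x| ^ τ) ∂μ = ENNReal.ofReal (1 + B) := by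
      rw [← ofReal_integral_eq_lintegral_ofReal
        (show Integrable (fun x : ℝ => 1 + |x| ^ τ) μ from (integrable_const 1).add hBint)
        (ae_of_all _ fun x => add_nonneg zero_le_one (Real.rpow_nonneg (abs_nonneg _) _))]
      congr 1
      rw [integral_add (integrable_const (1:ℝ)) hBint, hB, integral_const]
      simp
    have hcompl : ∫⁻ x in DDᶜ, ENNReal.ofReal (|x| ^ κ / |x - α| ^ κ) ∂μ
        ≤ ENNReal.ofReal (2 ^ κ * (1 + B) * a ^ (-κ)) := by
      have hhalfpow : (a / 2) ^ (-κ) = 2 ^ κ * a ^ (-κ) := by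
        rw [div_eq_mul_inv, Real.mul_rpow ha0 (by norm_num : (0:ℝ) ≤ 2⁻¹),
          Real.inv_rpow (by norm_num : (0:ℝ) ≤ 2), Real.rpow_neg (by norm_num : (0:ℝ) ≤ 2),
          inv_inv, mul_comm]
      calc ∫⁻ x in DDᶜ, ENNReal.ofReal (|x| ^ κ / |x - α| ^ κ) ∂μ
          ≤ ∫⁻ x in DDᶜ, ENNReal.ofReal ((a / 2) ^ (-κ) * (1 + |x| ^ τ)) ∂μ :=
            setLIntegral_mono hmeas1 hcpt
        _ ≤ ∫⁻ x, ENNReal.ofReal ((a / 2) ^ (-κ) * (1 + |x| ^ τ)) ∂μ :=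
            setLIntegral_le_lintegral _ _
        _ = ∫⁻ x, ENNReal.ofReal ((a / 2) ^ (-κ)) * ENNReal.ofReal (1 + |x| ^ τ) ∂μ :=
            lintegral_congr fun x => ENNReal.ofReal_mul (Real.rpow_nonneg ha2.le _)
        _ = ENNReal.ofReal ((a / 2) ^ (-κ)) * ENNReal.ofReal (1 + B) := by
            rw [lintegral_const_mul _ (f := fun x : ℝ => ENNReal.ofReal (1 + |x| ^ τ)) ((measurable_const.add
              ((measurable_id'.abs).pow_const τ)).ennreal_ofReal), hIB]
        _ = ENNReal.ofReal ((a / 2) ^ (-κ) * (1 + B)) :=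
            (ENNReal.ofReal_mul (Real.rpow_nonneg ha2.le _)).symm
        _ = ENNReal.ofReal (2 ^ κ * (1 + B) * a ^ (-κ)) := by
            rw [hhalfpow]; ring_nf
    -- pointwise bound on the ball
    have hmeas2 : Measurable fun x : ℝ => ENNReal.ofReal ((3 / 2 * a) ^ κ * |x - α| ^ (-κ)) :=
      (measurable_const.mul (((measurable_id.sub_const α).abs).pow_const (-κ))).ennreal_ofReal
    have hbpt : ∀ x ∈ DD, ENNReal.ofReal (|x| ^ κ / |x - α| ^ κ)
        ≤ ENNReal.ofReal ((3 / 2 * a) ^ κ * |x - α| ^ (-κ)) := by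
      intro x hx
      by_cases hxα : x = α
      · rw [hxα]
        simp [Real.zero_rpow (ne_of_gt hκ0)]
      · have h1 : 0 < |x - α| := abs_pos.mpr (sub_ne_zero.mpr hxα)
        apply ENNReal.ofReal_le_ofReal
        have hclose : |x - α| ≤ a / 2 := by
          have := Metric.mem_closedBall.mp hx
          rwa [Real.dist_eq] at this
        have hxb : |x| ≤ 3 / 2 * a := by
          calc |x| = |(x - α) + α| := by ring_nf
            _ ≤ |x - α| + |α| := abs_add_le _ _
            _ ≤ a / 2 + a := by rw [← ha]; linarith
            _ = 3 / 2 * a := by ring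
        have hnum : |x| ^ κ ≤ (3 / 2 * a) ^ κ :=
          Real.rpow_le_rpow (abs_nonneg _) hxb hκ0.le
        calc |x| ^ κ / |x - α| ^ κ ≤ (3 / 2 * a) ^ κ / |x - α| ^ κ := by
              have hdp : (0:ℝ) < |x - α| ^ κ := Real.rpow_pos_of_pos h1 _
              gcongr
          _ = (3 / 2 * a) ^ κ * |x - α| ^ (-κ) := by
              rw [Real.rpow_neg (abs_nonneg _), div_eq_mul_inv]
    -- mass of the ball
    have hmle : (μ DD).toReal ≤ B * (a / 2) ^ (-τ) := by
      have hsub : DD ⊆ {x : ℝ | a / 2 ≤ |x|} := by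
        intro x hx
        have hclose : |x - α| ≤ a / 2 := by
          have := Metric.mem_closedBall.mp hx
          rwa [Real.dist_eq] at this
        have : a ≤ |x - α| + |x| := by
          calc a = |α| := ha
            _ = |(α - x) + x| := by ring_nf
            _ ≤ |α - x| + |x| := abs_add_le _ _
            _ = |x - α| + |x| := by rw [abs_sub_comm]
        simp only [mem_setOf_eq]
        linarith
      calc (μ DD).toReal ≤ (ENNReal.ofReal (B * (a / 2) ^ (-τ))).toReal := by
            apply ENNReal.toReal_mono ENNReal.ofReal_ne_top
            exact le_trans (measure_mono hsub)
              (AizenmanProofAux.markov_abs hτ₀ hBint hB ha2)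
        _ = B * (a / 2) ^ (-τ) :=
            ENNReal.toReal_ofReal (mul_nonneg hB0 (Real.rpow_nonneg ha2.le _))
    -- bound for the ball part
    have hreal : (3 / 2 * a) ^ κ * ((CH + 1) * (μ DD).toReal ^ (1 - κ * r))
        ≤ C2 * a ^ (-κ) := by
      have hm0 : (0:ℝ) ≤ (μ DD).toReal := ENNReal.toReal_nonneg
      have step1 : (μ DD).toReal ^ (1 - κ * r) ≤ (B * (a / 2) ^ (-τ)) ^ (1 - κ * r) :=
        Real.rpow_le_rpow hm0 hmle hκr0.le
      have step2 : (B * (a / 2) ^ (-τ)) ^ (1 - κ * r)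
          = B ^ (1 - κ * r) * ((a / 2) ^ (-τ)) ^ (1 - κ * r) :=
        Real.mul_rpow hB0 (Real.rpow_nonneg ha2.le _)
      have step3 : ((a / 2) ^ (-τ)) ^ (1 - κ * r) = (a / 2) ^ (-(τ * (1 - κ * r))) := by
        rw [← Real.rpow_mul ha2.le]
        ring_nf
      have step4 : (a / 2) ^ (-(τ * (1 - κ * r))) = a ^ (-(τ * (1 - κ * r)))
          * 2 ^ (τ * (1 - κ * r)) := by
        rw [div_eq_mul_inv, Real.mul_rpow ha0 (by norm_num : (0:ℝ) ≤ 2⁻¹),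
          Real.inv_rpow (by norm_num : (0:ℝ) ≤ 2), Real.rpow_neg (by norm_num : (0:ℝ) ≤ 2),
          inv_inv]
      have step5 : a ^ (-(τ * (1 - κ * r))) ≤ a ^ (-(2 * κ)) :=
        Real.rpow_le_rpow_of_exponent_le hcase.le (by linarith)
      have step6 : (3 / 2 * a) ^ κ = (3 / 2 : ℝ) ^ κ * a ^ κ :=
        Real.mul_rpow (by norm_num) ha0
      have step7 : a ^ κ * a ^ (-(2 * κ)) = a ^ (-κ) := by
        rw [← Real.rpow_add (by linarith : (0:ℝ) < a)]
        ring_nf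
      calc (3 / 2 * a) ^ κ * ((CH + 1) * (μ DD).toReal ^ (1 - κ * r))
          ≤ (3 / 2 * a) ^ κ * ((CH + 1) * (B ^ (1 - κ * r) * ((a / 2) ^ (-τ)) ^ (1 - κ * r))) := by
            apply mul_le_mul_of_nonneg_left _ (Real.rpow_nonneg (by positivity) _)
            apply mul_le_mul_of_nonneg_left _ (by linarith)
            rw [← step2]
            exact step1
        _ = (3 / 2 : ℝ) ^ κ * ((CH + 1) * (B ^ (1 - κ * r) * 2 ^ (τ * (1 - κ * r))))
            * (a ^ κ * a ^ (-(τ * (1 - κ * r)))) := by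
            rw [step3, step4, step6]; ring
        _ ≤ (3 / 2 : ℝ) ^ κ * ((CH + 1) * (B ^ (1 - κ * r) * 2 ^ (τ * (1 - κ * r))))
            * (a ^ κ * a ^ (-(2 * κ))) := by
            apply mul_le_mul_of_nonneg_left _ ?_
            · exact mul_le_mul_of_nonneg_left step5 (Real.rpow_nonneg ha0 _)
            · exact mul_nonneg (Real.rpow_nonneg (by norm_num) _)
                (mul_nonneg (by linarith) (mul_nonneg (Real.rpow_nonneg hB0 _)
                  (Real.rpow_nonneg (by norm_num) _)))
        _ = C2 * a ^ (-κ) := by rw [hC2, step7]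
    have hball2 : ∫⁻ x in DD, ENNReal.ofReal (|x| ^ κ / |x - α| ^ κ) ∂μ
        ≤ ENNReal.ofReal (C2 * a ^ (-κ)) := by
      have hIFM : IsFiniteMeasure μ := inferInstance
      calc ∫⁻ x in DD, ENNReal.ofReal (|x| ^ κ / |x - α| ^ κ) ∂μ
          ≤ ∫⁻ x in DD, ENNReal.ofReal ((3 / 2 * a) ^ κ * |x - α| ^ (-κ)) ∂μ :=
            setLIntegral_mono hmeas2 hbpt
        _ = ∫⁻ x in DD, ENNReal.ofReal ((3 / 2 * a) ^ κ)
              * ENNReal.ofReal (|x - α| ^ (-κ)) ∂μ :=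
            lintegral_congr fun x => ENNReal.ofReal_mul (Real.rpow_nonneg (by positivity) _)
        _ = ENNReal.ofReal ((3 / 2 * a) ^ κ)
              * ∫⁻ x in DD, ENNReal.ofReal (|x - α| ^ (-κ)) ∂μ := by
            rw [lintegral_const_mul _ (((measurable_id'.sub_const α).abs).pow_const
              (-κ)).ennreal_ofReal]
        _ ≤ ENNReal.ofReal ((3 / 2 * a) ^ κ)
              * ENNReal.ofReal ((CH + 1) * (μ DD).toReal ^ (1 - κ * r)) :=
            mul_le_mul_right (AizenmanProofAux.ball_bound hfmeas hq hQint hQ hκ0 hκr hμf α DD) _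
        _ = ENNReal.ofReal ((3 / 2 * a) ^ κ * ((CH + 1) * (μ DD).toReal ^ (1 - κ * r))) :=
            (ENNReal.ofReal_mul (Real.rpow_nonneg (by positivity) _)).symm
        _ ≤ ENNReal.ofReal (C2 * a ^ (-κ)) := ENNReal.ofReal_le_ofReal hreal
    -- combine
    have hGlow2 : ENNReal.ofReal (1 / 2 * Pinv * a ^ (-κ)) ≤ G := by
      refine le_trans (ENNReal.ofReal_le_ofReal ?_) hGlow
      have hRa : (0:ℝ) < R + a := by linarith
      have hprod : Pinv * a ^ (-κ) = ((R + 1) * a) ^ (-κ) := by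
        rw [hPinv, ← Real.mul_rpow (by linarith : (0:ℝ) ≤ R + 1) ha0]
      have hcmp : ((R + 1) * a) ^ (-κ) ≤ (R + a) ^ (-κ) := by
        apply Real.rpow_le_rpow_of_nonpos hRa _ (neg_nonpos.mpr hκ0.le)
        nlinarith
      rw [mul_assoc, hprod]
      linarith
    calc ∫⁻ x, ENNReal.ofReal (|x| ^ κ / |x - α| ^ κ) ∂μ
        = (∫⁻ x in DD, ENNReal.ofReal (|x| ^ κ / |x - α| ^ κ) ∂μ)
          + ∫⁻ x in DDᶜ, ENNReal.ofReal (|x| ^ κ / |x - α| ^ κ) ∂μ :=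
          (lintegral_add_compl _ hDmeas).symm
      _ ≤ ENNReal.ofReal (C2 * a ^ (-κ)) + ENNReal.ofReal (2 ^ κ * (1 + B) * a ^ (-κ)) :=
          add_le_add hball2 hcompl
      _ = ENNReal.ofReal (C3 * a ^ (-κ)) := by
          rw [← ENNReal.ofReal_add (mul_nonneg hC20 (Real.rpow_nonneg ha0 _))
            (mul_nonneg (mul_nonneg (Real.rpow_nonneg (by norm_num) _) (by linarith))
              (Real.rpow_nonneg ha0 _)), hC3]
          ring_nf
      _ ≤ ENNReal.ofReal (K * (1 / 2 * Pinv * a ^ (-κ))) := by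
          apply ENNReal.ofReal_le_ofReal
          have hKC : C3 ≤ K * (1 / 2 * Pinv) := by
            have expand : K * (1 / 2 * Pinv) = (P * Pinv) * (C3 + 1) + Pinv / 2 := by
              rw [hK]; ring
            rw [expand, hPP]
            linarith [hPinvpos]
          calc C3 * a ^ (-κ) ≤ (K * (1 / 2 * Pinv)) * a ^ (-κ) :=
                mul_le_mul_of_nonneg_right hKC (Real.rpow_nonneg ha0 _)
            _ = K * (1 / 2 * Pinv * a ^ (-κ)) := by ring
      _ = ENNReal.ofReal K * ENNReal.ofReal (1 / 2 * Pinv * a ^ (-κ)) :=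
          ENNReal.ofReal_mul hK0
      _ ≤ ENNReal.ofReal K * G := mul_le_mul_right hGlow2 _
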